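/- Suppose D and A are lower unitriangular matrices (with respect to a partial order ⊴ on the index set, i.e. D_{λμ} = 0 unless λ ⊴ μ and D_{λλ} = 1) with Laurent polynomial entries over ℚ satisfying D(q) = A(q) · D(q^{-1}). If additionally A_{λτ}(1) = δ_{λτ}, then differentiating at q = 1 gives D'_{λμ}(1) = (1/2) Σ_{λ ⊴ τ ⊴ μ} A'_{λτ}(1) D_{τμ}(1). -/

import Mathlib

/-- `f : ℝ → ℝ` is (the evaluation of) a Laurent polynomial with rational
coefficients. -/
def IsLaurentQ (f : ℝ → ℝ) : Prop :=
  ∃ (p : Polynomial ℚ) (n : ℕ), ∀ q : ℝ, q ≠ 0 → f q = Polynomial.aeval q p / q ^ n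

lemma IsLaurentQ.diffAt {f : ℝ → ℝ} (hf : IsLaurentQ f) : DifferentiableAt ℝ f 1 := by
  obtain ⟨p, n, hp⟩ := hf
  have hg : DifferentiableAt ℝ (fun q : ℝ => Polynomial.aeval q p / q ^ n) 1 := by
    have h1 : DifferentiableAt ℝ (fun q : ℝ => Polynomial.aeval q p) 1 := by
      have : (fun q : ℝ => Polynomial.aeval q p) =
          fun q : ℝ => (p.map (algebraMap ℚ ℝ)).eval q := by
        funext q
        simp [Polynomial.aeval_def, Polynomial.eval_map]
      rw [this]
      exact (p.map (algebraMap ℚ ℝ)).differentiableAt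
    exact h1.div (differentiableAt_pow n) (by norm_num)
  have hev : f =ᶠ[nhds (1:ℝ)] fun q : ℝ => Polynomial.aeval q p / q ^ n := by
    filter_upwards [eventually_ne_nhds (one_ne_zero (α := ℝ))] with q hq
    exact hp q hq
  exact hg.congr_of_eventuallyEq hev

/-- Let `D` and `A` be lower unitriangular matrices (w.r.t. a
partial order `⊴` on a finite index set) with Laurent polynomial entries over
`ℚ`, satisfying `D(q) = A(q) · D(q⁻¹)`.  If moreover `A_{λτ}(1) = δ_{λτ}`, then
differentiating at `q = 1` gives
`D'_{λμ}(1) = (1/2) Σ_{λ ⊴ τ ⊴ μ} A'_{λτ}(1) D_{τμ}(1)`. -/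
theorem stmt12 {ι : Type*} [Fintype ι] [DecidableEq ι] [PartialOrder ι]
    [DecidableRel (α := ι) (· ≤ ·)]
    (d a : ι → ι → ℝ → ℝ)
    (hdL : ∀ lam mu, IsLaurentQ (d lam mu)) (haL : ∀ lam mu, IsLaurentQ (a lam mu))
    (hdtri : ∀ lam mu, ¬ lam ≤ mu → ∀ q, d lam mu q = 0)
    (hatri : ∀ lam mu, ¬ lam ≤ mu → ∀ q, a lam mu q = 0)
    (hddiag : ∀ lam q, d lam lam q = 1) (hadiag : ∀ lam q, a lam lam q = 1)
    (heq : ∀ lam mu (q : ℝ), q ≠ 0 →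
      d lam mu q = ∑ tau : ι, a lam tau q * d tau mu q⁻¹)
    (ha1 : ∀ lam tau, lam ≠ tau → a lam tau 1 = 0) :
    ∀ lam mu : ι,
      deriv (d lam mu) 1 =
        (1 / 2) * ∑ tau ∈ Finset.univ.filter (fun tau => lam ≤ tau ∧ tau ≤ mu),
          deriv (a lam tau) 1 * d tau mu 1 := by
  intro lam mu
  -- derivative of the right-hand side function at 1
  have hG : HasDerivAt (fun q : ℝ => ∑ tau : ι, a lam tau q * d tau mu q⁻¹)
      (∑ tau : ι, (deriv (a lam tau) 1 * d tau mu 1 +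
        a lam tau 1 * (-(deriv (d tau mu) 1)))) 1 := by
    apply HasDerivAt.fun_sum
    intro tau _
    have hA : HasDerivAt (a lam tau) (deriv (a lam tau) 1) 1 :=
      (haL lam tau).diffAt.hasDerivAt
    have hD : HasDerivAt (d tau mu) (deriv (d tau mu) 1) 1 :=
      (hdL tau mu).diffAt.hasDerivAt
    have hInv : HasDerivAt (fun q : ℝ => q⁻¹) (-1) 1 := by
      simpa using hasDerivAt_inv (one_ne_zero (α := ℝ))
    have hDinv : HasDerivAt (fun q : ℝ => d tau mu q⁻¹) (-(deriv (d tau mu) 1)) 1 := by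
      have hD' : HasDerivAt (d tau mu) (deriv (d tau mu) 1) ((1:ℝ)⁻¹) := by
        simpa using hD
      have := hD'.comp 1 hInv
      simpa [mul_comm, Function.comp_def] using this
    have hD1 : d tau mu (1:ℝ)⁻¹ = d tau mu 1 := by norm_num
    have := hA.fun_mul hDinv
    simpa [hD1] using this
  have hev : d lam mu =ᶠ[nhds (1:ℝ)]
      fun q : ℝ => ∑ tau : ι, a lam tau q * d tau mu q⁻¹ := by
    filter_upwards [eventually_ne_nhds (one_ne_zero (α := ℝ))] with q hq
    exact heq lam mu q hq
  have hder : deriv (d lam mu) 1 =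
      ∑ tau : ι, (deriv (a lam tau) 1 * d tau mu 1 +
        a lam tau 1 * (-(deriv (d tau mu) 1))) := by
    rw [hev.deriv_eq]
    exact hG.deriv
  -- split the sum
  rw [Finset.sum_add_distrib] at hder
  have h2 : ∑ tau : ι, a lam tau 1 * (-(deriv (d tau mu) 1)) = -(deriv (d lam mu) 1) := by
    rw [Finset.sum_eq_single lam]
    · rw [hadiag lam 1]; ring
    · intro t _ ht
      rw [ha1 lam t (Ne.symm ht)]; ring
    · intro h; exact absurd (Finset.mem_univ lam) h
  rw [h2] at hder
  -- restrict the sum to the interval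
  have hsum : ∑ tau : ι, deriv (a lam tau) 1 * d tau mu 1 =
      ∑ tau ∈ Finset.univ.filter (fun tau => lam ≤ tau ∧ tau ≤ mu),
        deriv (a lam tau) 1 * d tau mu 1 := by
    rw [Finset.sum_filter]
    apply Finset.sum_congr rfl
    intro t _
    by_cases h : lam ≤ t ∧ t ≤ mu
    · rw [if_pos h]
    · rw [if_neg h]
      rcases not_and_or.mp h with h1 | h2
      · have : a lam t = fun _ => 0 := funext (hatri lam t h1)
        rw [this, deriv_const]; ring
      · rw [hdtri t mu h2 1]; ring
  rw [hsum] at hder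
  linarith
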